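/- (RMIS third-order accuracy without the fourth-order condition.) Under the MIS/RMIS tableau setup, assume: (i) the inner table is second order, row-sum consistent, and has an explicit first stage, i.e. (b^I)^⊺𝟙 = 1, (b^I)^⊺c^I = 1/2, A^I 𝟙 = c^I, c^I_1 = 0, and the first row of A^I is zero; (ii) the outer table is explicit (A^O strictly lower triangular), row-sum consistent (A^O 𝟙_{s^O} = c^O), and third order, i.e. (b^O)^⊺𝟙 = 1, (b^O)^⊺c^O = 1/2, (b^O)^⊺((c^O)^2) = 1/3, and (b^O)^⊺A^O c^O = 1/6. Then all GARK order conditions through order three hold for the RMIS tableau: for every σ, ν ∈ {f, s}: (b^{{σ}})^⊺𝟙 = 1, (b^{{σ}})^⊺c^{{σ}} = 1/2, (b^{{σ}})^⊺((c^{{σ}})^2) = 1/3, and (b^{{σ}})^⊺A^{{σ,ν}}c^{{ν}} = 1/6. -/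
import Mathlib


open Matrix BigOperators Finset

/-- The increments `d_j = c^O_{j+1} - c^O_j` (with `d_{s^O} = 1 - c^O_{s^O}`). -/
noncomputable def misD (sO : ℕ) (cO : Fin sO → ℝ) (j : Fin sO) : ℝ :=
  if h : j.val + 1 < sO then cO ⟨j.val + 1, h⟩ - cO j else 1 - cO j

/-- The fast-fast GARK coefficient matrix `A^{f,f}` of the MIS/RMIS tableau. -/
noncomputable def misAff (sI sO : ℕ) (AI : Matrix (Fin sI) (Fin sI) ℝ)
    (bI : Fin sI → ℝ) (cO : Fin sO → ℝ) :
    Matrix (Fin sO × Fin sI) (Fin sO × Fin sI) ℝ :=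
  fun ip jq =>
    if jq.1 < ip.1 then misD sO cO jq.1 * bI jq.2
    else if jq.1 = ip.1 then misD sO cO ip.1 * AI ip.2 jq.2
    else 0

/-- The slow-fast GARK coefficient matrix `A^{s,f}` of the MIS/RMIS tableau. -/
noncomputable def misAsf (sI sO : ℕ) (bI : Fin sI → ℝ) (cO : Fin sO → ℝ) :
    Matrix (Fin sO) (Fin sO × Fin sI) ℝ :=
  fun i jq => if jq.1 < i then misD sO cO jq.1 * bI jq.2 else 0

/-- The fast-slow GARK coefficient matrix `A^{f,s}` of the MIS/RMIS tableau. -/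
noncomputable def misAfs (sI sO : ℕ) (cI : Fin sI → ℝ)
    (AO : Matrix (Fin sO) (Fin sO) ℝ) (bO : Fin sO → ℝ) :
    Matrix (Fin sO × Fin sI) (Fin sO) ℝ :=
  fun ip j =>
    if ip.1.val = 0 then
      (if h : 1 < sO then cI ip.2 * AO ⟨1, h⟩ j else 0)
    else if h : ip.1.val + 1 < sO then
      AO ip.1 j + cI ip.2 * (AO ⟨ip.1.val + 1, h⟩ j - AO ip.1 j)
    else
      AO ip.1 j + cI ip.2 * (bO j - AO ip.1 j)

/-- The fast abscissae `c^f` of the MIS/RMIS tableau. -/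
noncomputable def misCf (sI sO : ℕ) (cI : Fin sI → ℝ) (cO : Fin sO → ℝ) :
    Fin sO × Fin sI → ℝ :=
  fun ip => cO ip.1 + misD sO cO ip.1 * cI ip.2

/-- The RMIS fast weights `b^f` (i-th block is `b^O_i e_1`). -/
noncomputable def misBf (sI sO : ℕ) (bO : Fin sO → ℝ) : Fin sO × Fin sI → ℝ :=
  fun ip => if ip.2.val = 0 then bO ip.1 else 0

/-- The vector `v^O` appearing in the fourth-order RMIS condition. -/
noncomputable def misV (sO : ℕ) (bO cO : Fin sO → ℝ) (i : Fin sO) : ℝ :=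
  if i.val = 0 then 0
  else if h : i.val + 1 < sO then
    bO i * (cO i - cO ⟨i.val - 1, by have := i.isLt; omega⟩) +
      (cO ⟨i.val + 1, h⟩ - cO ⟨i.val - 1, by have := i.isLt; omega⟩) *
        ∑ j ∈ Finset.univ.filter (fun j => i < j), bO j
  else bO i * (cO i - cO ⟨i.val - 1, by have := i.isLt; omega⟩)

/-- Extension of `cO` to `ℕ` (value `1` beyond `sO`). -/
noncomputable def cExt (sO : ℕ) (cO : Fin sO → ℝ) (n : ℕ) : ℝ :=
  if h : n < sO then cO ⟨n, h⟩ else 1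

lemma misD_eq_cExt (sO : ℕ) (cO : Fin sO → ℝ) (j : Fin sO) :
    misD sO cO j = cExt sO cO (j.val + 1) - cExt sO cO j.val := by
  unfold misD cExt
  have hj := j.isLt
  split_ifs with h <;> simp [hj]

lemma sum_filter_lt {sO : ℕ} (i : Fin sO) (f : Fin sO → ℝ) :
    ∑ j ∈ Finset.univ.filter (fun j => j < i), f j
      = ∑ n ∈ Finset.range i.val, (fun n => if h : n < sO then f ⟨n, h⟩ else 0) n := by
  refine Finset.sum_nbij' (fun j => j.val) (fun n => if h : n < sO then ⟨n, h⟩ else i)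
    ?_ ?_ ?_ ?_ ?_ <;> intro a ha <;>
    simp only [Finset.mem_filter, Finset.mem_univ, true_and, Finset.mem_range] at *
  · exact ha
  · have h1 : a < sO := lt_trans ha i.isLt
    simp [h1, Fin.lt_def, ha]
  · simp
  · have h1 : a < sO := lt_trans ha i.isLt
    simp [h1]
  · have h1 : a.val < sO := a.isLt
    simp [h1]

/-- With a second-order inner table (row-sum consistent, explicit first
stage) and an explicit, row-sum consistent third-order outer table, all GARK order
conditions through order three hold for the RMIS tableau. -/
theorem rmis_third_order (sI sO : ℕ) (hsI : 1 ≤ sI) (hsO : 2 ≤ sO)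
    (AI : Matrix (Fin sI) (Fin sI) ℝ) (bI cI : Fin sI → ℝ)
    (AO : Matrix (Fin sO) (Fin sO) ℝ) (bO cO : Fin sO → ℝ)
    (hcO1 : cO ⟨0, by omega⟩ = 0)
    -- (i) inner table: second order, row-sum consistent, explicit first stage
    (hbI1 : ∑ q, bI q = 1)
    (hbI2 : ∑ q, bI q * cI q = 1 / 2)
    (hAIrow : ∀ p, ∑ q, AI p q = cI p)
    (hcI1 : cI ⟨0, by omega⟩ = 0)
    (hAI1 : ∀ q, AI ⟨0, by omega⟩ q = 0)
    -- (ii) outer table: explicit, row-sum consistent, third order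
    (hAOexp : ∀ i j : Fin sO, i ≤ j → AO i j = 0)
    (hAOrow : ∀ i, ∑ j, AO i j = cO i)
    (hbO1 : ∑ i, bO i = 1)
    (hbO2 : ∑ i, bO i * cO i = 1 / 2)
    (hbO3 : ∑ i, bO i * (cO i) ^ 2 = 1 / 3)
    (hbO4 : bO ⬝ᵥ (AO *ᵥ cO) = 1 / 6) :
    let Bf := misBf sI sO bO
    let Cf := misCf sI sO cI cO
    let Aff := misAff sI sO AI bI cO
    let Afs := misAfs sI sO cI AO bO
    let Asf := misAsf sI sO bI cO
    -- order 1
    ((∑ ip, Bf ip = 1) ∧ (∑ i, bO i = 1) ∧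
    -- order 2
    (∑ ip, Bf ip * Cf ip = 1 / 2) ∧ (∑ i, bO i * cO i = 1 / 2) ∧
    -- order 3
    (∑ ip, Bf ip * (Cf ip) ^ 2 = 1 / 3) ∧ (∑ i, bO i * (cO i) ^ 2 = 1 / 3) ∧
    (Bf ⬝ᵥ (Aff *ᵥ Cf) = 1 / 6) ∧ (Bf ⬝ᵥ (Afs *ᵥ cO) = 1 / 6) ∧
    (bO ⬝ᵥ (Asf *ᵥ Cf) = 1 / 6) ∧ (bO ⬝ᵥ (AO *ᵥ cO) = 1 / 6)) := by
  intro Bf Cf Aff Afs Asf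
  have h0I : 0 < sI := hsI
  have h0O : 0 < sO := by omega
  set p0 : Fin sI := ⟨0, h0I⟩ with hp0
  -- Bf-weighted sums reduce to sums against bO at p = 0
  have bf_sum : ∀ X : Fin sO × Fin sI → ℝ,
      ∑ ip, Bf ip * X ip = ∑ i, bO i * X (i, p0) := by
    intro X
    rw [Fintype.sum_prod_type]
    refine Finset.sum_congr rfl fun i _ => ?_
    rw [Finset.sum_eq_single p0]
    · simp [Bf, misBf, p0]
    · intro b _ hb
      have : b.val ≠ 0 := fun h => hb (Fin.ext h)
      simp [Bf, misBf, this]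
    · simp
  have hcI0 : cI p0 = 0 := hcI1
  have hAI0 : ∀ q, AI p0 q = 0 := hAI1
  have hcO0 : cO ⟨0, h0O⟩ = 0 := hcO1
  have cf0 : ∀ i : Fin sO, Cf (i, p0) = cO i := by
    intro i; simp [Cf, misCf, hcI0]
  -- telescoping sums
  have h1 : ∀ i : Fin sO,
      ∑ j ∈ Finset.univ.filter (fun j => j < i), misD sO cO j = cO i := by
    intro i
    rw [sum_filter_lt]
    have : ∀ n ∈ Finset.range i.val,
        (fun n => if h : n < sO then misD sO cO ⟨n, h⟩ else 0) n
          = cExt sO cO (n + 1) - cExt sO cO n := by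
      intro n hn
      have hn' : n < sO := lt_trans (Finset.mem_range.mp hn) i.isLt
      simp only [hn', dif_pos]
      exact misD_eq_cExt sO cO ⟨n, hn'⟩
    rw [Finset.sum_congr rfl this, Finset.sum_range_sub (cExt sO cO)]
    have hi := i.isLt
    simp [cExt, hi, h0O, hcO0]
  have h2 : ∀ i : Fin sO,
      ∑ j ∈ Finset.univ.filter (fun j => j < i),
        misD sO cO j * (cO j + misD sO cO j / 2) = (cO i) ^ 2 / 2 := by
    intro i
    rw [sum_filter_lt]
    have : ∀ n ∈ Finset.range i.val,
        (fun n => if h : n < sO then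
            misD sO cO ⟨n, h⟩ * (cO ⟨n, h⟩ + misD sO cO ⟨n, h⟩ / 2) else 0) n
          = (fun m => cExt sO cO m ^ 2 / 2) (n + 1) - (fun m => cExt sO cO m ^ 2 / 2) n := by
      intro n hn
      have hn' : n < sO := lt_trans (Finset.mem_range.mp hn) i.isLt
      simp only [hn', dif_pos]
      rw [misD_eq_cExt sO cO ⟨n, hn'⟩]
      have : cExt sO cO n = cO ⟨n, hn'⟩ := by simp [cExt, hn']
      rw [this]; ring
    rw [Finset.sum_congr rfl this, Finset.sum_range_sub (fun m => cExt sO cO m ^ 2 / 2)]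
    have hi := i.isLt
    simp [cExt, hi, h0O, hcO0]
  -- inner weighted row sums of Cf
  have hinner : ∀ j : Fin sO,
      ∑ q, bI q * Cf (j, q) = cO j + misD sO cO j / 2 := by
    intro j
    have : ∀ q : Fin sI, bI q * Cf (j, q)
        = bI q * cO j + misD sO cO j * (bI q * cI q) := by
      intro q; simp only [Cf, misCf]; ring
    rw [Finset.sum_congr rfl fun q _ => this q, Finset.sum_add_distrib,
      ← Finset.sum_mul, ← Finset.mul_sum, hbI1, hbI2]
    ring
  -- Aff row sums against Cf
  have hAffrow : ∀ i : Fin sO,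
      ∑ jq : Fin sO × Fin sI, Aff (i, p0) jq * Cf jq = (cO i) ^ 2 / 2 := by
    intro i
    rw [Fintype.sum_prod_type]
    have key : ∀ j : Fin sO, ∑ q, Aff (i, p0) (j, q) * Cf (j, q)
        = if j < i then misD sO cO j * (cO j + misD sO cO j / 2) else 0 := by
      intro j
      by_cases hji : j < i
      · simp only [Aff, misAff, hji, if_pos, if_true]
        rw [← hinner j, Finset.mul_sum]
        exact Finset.sum_congr rfl fun q _ => by ring
      · rw [if_neg hji]
        by_cases hje : j = i
        · subst hje
          simp [Aff, misAff, lt_irrefl, hAI0]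
        · simp [Aff, misAff, hji, hje]
    rw [Finset.sum_congr rfl fun j _ => key j, ← Finset.sum_filter, h2]
  -- Asf row sums against Cf
  have hAsfrow : ∀ i : Fin sO,
      ∑ jq : Fin sO × Fin sI, Asf i jq * Cf jq = (cO i) ^ 2 / 2 := by
    intro i
    rw [Fintype.sum_prod_type]
    have key : ∀ j : Fin sO, ∑ q, Asf i (j, q) * Cf (j, q)
        = if j < i then misD sO cO j * (cO j + misD sO cO j / 2) else 0 := by
      intro j
      by_cases hji : j < i
      · simp only [Asf, misAsf, hji, if_pos, if_true]
        rw [← hinner j, Finset.mul_sum]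
        exact Finset.sum_congr rfl fun q _ => by ring
      · simp [Asf, misAsf, hji]
    rw [Finset.sum_congr rfl fun j _ => key j, ← Finset.sum_filter, h2]
  -- Afs rows coincide with AO at p = 0
  have hAfs0 : ∀ (i j : Fin sO), Afs (i, p0) j = AO i j := by
    intro i j
    simp only [Afs, misAfs]
    by_cases hi0 : i.val = 0
    · rw [if_pos hi0]
      have hij : i ≤ j := by
        rw [Fin.le_def, hi0]; exact Nat.zero_le _
      rw [hAOexp i j hij]
      split_ifs <;> simp [hcI0]
    · rw [if_neg hi0]
      split_ifs <;> simp [hcI0]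
  -- now discharge the ten conditions
  refine ⟨?_, hbO1, ?_, hbO2, ?_, hbO3, ?_, ?_, ?_, hbO4⟩
  · have := bf_sum (fun _ => 1)
    simpa [hbO1] using this
  · rw [bf_sum Cf]
    simpa [cf0] using hbO2
  · rw [bf_sum (fun ip => Cf ip ^ 2)]
    have : ∀ i : Fin sO, Cf (i, p0) ^ 2 = cO i ^ 2 := fun i => by rw [cf0]
    simpa [this] using hbO3
  · show ∑ ip, Bf ip * (∑ jq, Aff ip jq * Cf jq) = 1 / 6
    rw [bf_sum (fun ip => ∑ jq, Aff ip jq * Cf jq)]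
    have : ∀ i : Fin sO, bO i * (∑ jq, Aff (i, p0) jq * Cf jq)
        = (1 / 2) * (bO i * cO i ^ 2) := by
      intro i; rw [hAffrow i]; ring
    rw [Finset.sum_congr rfl fun i _ => this i, ← Finset.mul_sum, hbO3]
    norm_num
  · show ∑ ip, Bf ip * (∑ j, Afs ip j * cO j) = 1 / 6
    rw [bf_sum (fun ip => ∑ j, Afs ip j * cO j)]
    have : ∀ i : Fin sO, (∑ j, Afs (i, p0) j * cO j) = ∑ j, AO i j * cO j := by
      intro i; exact Finset.sum_congr rfl fun j _ => by rw [hAfs0]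
    rw [Finset.sum_congr rfl fun i _ => by rw [this i]]
    simpa [dotProduct, mulVec] using hbO4
  · show ∑ i, bO i * (∑ jq, Asf i jq * Cf jq) = 1 / 6
    have : ∀ i : Fin sO, bO i * (∑ jq, Asf i jq * Cf jq)
        = (1 / 2) * (bO i * cO i ^ 2) := by
      intro i; rw [hAsfrow i]; ring
    rw [Finset.sum_congr rfl fun i _ => this i, ← Finset.mul_sum, hbO3]
    norm_num
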